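/- arXiv:1503.05003 — 2 statements merged into one kernel-verified Lean document; each statement's English description precedes it below -/
import Mathlib

section
/- An infinite Hermitian complex matrix M admits a generalized Cholesky factorization M = A E A⁺, with A lower triangular with positive diagonal entries and E a diagonal matrix with entries ±1, if and only if M is quasi-definite, i.e., every finite leading principal submatrix M_n is nonsingular. Moreover, such a factorization is unique. -/
/-- Lower triangular infinite matrix. -/
def LowerTri (A : ℕ → ℕ → ℂ) : Prop := ∀ i j : ℕ, i < j → A i j = 0

/-- The diagonal entries are positive reals. -/
def PosDiag (A : ℕ → ℕ → ℂ) : Prop := ∀ i : ℕ, 0 < (A i i).re ∧ (A i i).im = 0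

/-- A sign sequence (diagonal of a sign matrix). -/
def IsSign (E : ℕ → ℝ) : Prop := ∀ i : ℕ, E i = 1 ∨ E i = -1

/-- Hermitian infinite matrix. -/
def HermM (M : ℕ → ℕ → ℂ) : Prop := ∀ i j : ℕ, M i j = (starRingEnd ℂ) (M j i)

/-- Generalized Cholesky factorization M = A E A⁺. -/
def GCF (M A : ℕ → ℕ → ℂ) (E : ℕ → ℝ) : Prop :=
  LowerTri A ∧ PosDiag A ∧ IsSign E ∧
    ∀ i k : ℕ, M i k = ∑ᶠ j, A i j * (E j : ℂ) * (starRingEnd ℂ) (A k j)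

/-- Cholesky factorization M = A A⁺. -/
def CF (M A : ℕ → ℕ → ℂ) : Prop :=
  LowerTri A ∧ PosDiag A ∧ ∀ i k : ℕ, M i k = ∑ᶠ j, A i j * (starRingEnd ℂ) (A k j)

/-- Quasi-definiteness: all leading principal submatrices are nonsingular. -/
def QuasiDef (M : ℕ → ℕ → ℂ) : Prop :=
  ∀ n : ℕ, (Matrix.of fun i j : Fin n => M i j).det ≠ 0

/-- The quadratic form X M X⁺ on finitely supported row vectors. -/
noncomputable def quadForm (M : ℕ → ℕ → ℂ) (X : ℕ →₀ ℂ) : ℂ :=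
  ∑ i ∈ X.support, ∑ j ∈ X.support, X i * M i j * (starRingEnd ℂ) (X j)

/-- Positive definiteness: X M X⁺ > 0 for all finitely supported nonzero X. -/
noncomputable def PosDefM (M : ℕ → ℕ → ℂ) : Prop :=
  ∀ X : ℕ →₀ ℂ, X ≠ 0 → 0 < (quadForm M X).re ∧ (quadForm M X).im = 0

open Finset Complex
open scoped Matrix

noncomputable def chol (M : ℕ → ℕ → ℂ) : (j : ℕ) → (ℕ → ℂ) × ℝ
  | j =>
    let prev : Fin j → (ℕ → ℂ) × ℝ := fun l => chol M l
    let r : ℂ := M j j - ∑ l : Fin j, ((prev l).2 : ℂ) * ((Complex.normSq ((prev l).1 j) : ℝ) : ℂ)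
    let e : ℝ := if r.re < 0 then -1 else 1
    let d : ℝ := Real.sqrt |r.re|
    (fun i => if i < j then 0 else if i = j then (d : ℂ)
      else (M i j - ∑ l : Fin j, (prev l).1 i * ((prev l).2 : ℂ) * (starRingEnd ℂ) ((prev l).1 j)) / ((e : ℂ) * d), e)
  termination_by j => j
  decreasing_by exact l.isLt

noncomputable def cA (M : ℕ → ℕ → ℂ) (i j : ℕ) : ℂ := (chol M j).1 i
noncomputable def cE (M : ℕ → ℕ → ℂ) (j : ℕ) : ℝ := (chol M j).2
noncomputable def cr (M : ℕ → ℕ → ℂ) (j : ℕ) : ℝ :=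
  (M j j).re - ∑ l ∈ Finset.range j, cE M l * Complex.normSq (cA M j l)

lemma rC_re (M : ℕ → ℕ → ℂ) (j : ℕ) :
    (M j j - ∑ l : Fin j, ((chol M l).2 : ℂ) * ((Complex.normSq ((chol M l).1 j) : ℝ) : ℂ)).re
      = cr M j := by
  have h : ∑ l : Fin j, ((chol M l).2 : ℂ) * ((Complex.normSq ((chol M l).1 j) : ℝ) : ℂ)
      = ((∑ l ∈ Finset.range j, cE M l * Complex.normSq (cA M j l) : ℝ) : ℂ) := by
    rw [Complex.ofReal_sum, ← Fin.sum_univ_eq_sum_range]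
    simp [cE, cA, Complex.ofReal_mul]
  rw [h, Complex.sub_re, Complex.ofReal_re, cr]

lemma cE_eq (M : ℕ → ℕ → ℂ) (j : ℕ) : cE M j = if cr M j < 0 then -1 else 1 := by
  conv_lhs => rw [cE, chol]
  simp only [← rC_re M j]

lemma cA_diag (M : ℕ → ℕ → ℂ) (j : ℕ) : cA M j j = ((Real.sqrt |cr M j| : ℝ) : ℂ) := by
  conv_lhs => rw [cA, chol]
  simp only [lt_irrefl, if_false, eq_self_iff_true, if_true, rC_re M j]

lemma cA_lt (M : ℕ → ℕ → ℂ) {i j : ℕ} (h : i < j) : cA M i j = 0 := by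
  conv_lhs => rw [cA, chol]
  simp only [if_pos h]

lemma cA_gt (M : ℕ → ℕ → ℂ) {i j : ℕ} (h : j < i) :
    cA M i j = (M i j - ∑ l ∈ Finset.range j, cA M i l * ((cE M l : ℝ) : ℂ)
        * (starRingEnd ℂ) (cA M j l)) / (((cE M j : ℝ) : ℂ) * ((Real.sqrt |cr M j| : ℝ) : ℂ)) := by
  conv_lhs => rw [cA, chol]
  simp only [Nat.lt_asymm h, if_false, Nat.ne_of_gt h, rC_re M j, ← cE_eq M j]
  rw [← Fin.sum_univ_eq_sum_range (fun l => cA M i l * ((cE M l : ℝ) : ℂ) * (starRingEnd ℂ) (cA M j l)) j]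
  rfl

lemma cE_sign (M : ℕ → ℕ → ℂ) (j : ℕ) : cE M j = 1 ∨ cE M j = -1 := by
  rw [cE_eq]; split_ifs <;> simp

lemma cE_ne (M : ℕ → ℕ → ℂ) (j : ℕ) : cE M j ≠ 0 := by
  rcases cE_sign M j with h | h <;> rw [h] <;> norm_num

lemma cE_mul_abs (M : ℕ → ℕ → ℂ) (j : ℕ) : cE M j * |cr M j| = cr M j := by
  rw [cE_eq]; split_ifs with h
  · rw [abs_of_neg h]; ring
  · rw [_root_.abs_of_nonneg (not_lt.1 h)]; ring

lemma diag_key (M : ℕ → ℕ → ℂ) (j : ℕ) :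
    ((cE M j : ℝ) : ℂ) * (cA M j j * (starRingEnd ℂ) (cA M j j)) = ((cr M j : ℝ) : ℂ) := by
  rw [cA_diag, Complex.conj_ofReal, ← Complex.ofReal_mul, Real.mul_self_sqrt (abs_nonneg _),
    ← Complex.ofReal_mul, cE_mul_abs]

lemma cA_diag_ne (M : ℕ → ℕ → ℂ) {j : ℕ} (h : cr M j ≠ 0) : cA M j j ≠ 0 := by
  rw [cA_diag]
  simpa [Real.sqrt_eq_zero (abs_nonneg _), abs_eq_zero] using h

section main
variable {M : ℕ → ℕ → ℂ}

lemma herm_diag_real (hM : ∀ i j : ℕ, M i j = (starRingEnd ℂ) (M j i)) (j : ℕ) :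
    M j j = (((M j j).re : ℝ) : ℂ) := by
  have h := hM j j
  have him : (M j j).im = 0 := by
    have := congrArg Complex.im h
    simp only [Complex.conj_im] at this
    linarith
  exact Complex.ext rfl him

lemma chol_eq_low (hM : ∀ i j : ℕ, M i j = (starRingEnd ℂ) (M j i)) (i k : ℕ) (hk : k ≤ i)
    (hr : ∀ l, l < i → cr M l ≠ 0) :
    M i k = ∑ j ∈ Finset.range (k + 1),
      cA M i j * ((cE M j : ℝ) : ℂ) * (starRingEnd ℂ) (cA M k j) := by
  rw [Finset.sum_range_succ]
  rcases eq_or_lt_of_le hk with rfl | hki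
  · -- diagonal case
    have hsum : ∑ j ∈ Finset.range k, cA M k j * ((cE M j : ℝ) : ℂ) * (starRingEnd ℂ) (cA M k j)
        = (((M k k).re - cr M k : ℝ) : ℂ) := by
      rw [cr]
      push_cast
      rw [sub_sub_cancel]
      refine Finset.sum_congr rfl fun l _ => ?_
      rw [mul_comm (cA M k l), mul_assoc, Complex.mul_conj]
    have h2 : cA M k k * ((cE M k : ℝ) : ℂ) * (starRingEnd ℂ) (cA M k k)
        = ((cr M k : ℝ) : ℂ) := by rw [← diag_key]; ring
    rw [hsum, h2]
    conv_lhs => rw [herm_diag_real hM k]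
    push_cast
    ring
  · -- off-diagonal case
    have hrk : cr M k ≠ 0 := hr k hki
    have hne : ((cE M k : ℝ) : ℂ) * ((Real.sqrt |cr M k| : ℝ) : ℂ) ≠ 0 := by
      refine mul_ne_zero ?_ ?_
      · exact Complex.ofReal_ne_zero.2 (cE_ne M k)
      · rw [Complex.ofReal_ne_zero, Real.sqrt_ne_zero (abs_nonneg _)]
        simpa [abs_eq_zero] using hrk
    have hd : cA M i k * (((cE M k : ℝ) : ℂ) * (starRingEnd ℂ) (cA M k k))
        = M i k - ∑ l ∈ Finset.range k, cA M i l * ((cE M l : ℝ) : ℂ)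
            * (starRingEnd ℂ) (cA M k l) := by
      rw [cA_gt M hki, cA_diag, Complex.conj_ofReal]
      exact div_mul_cancel₀ _ hne
    rw [mul_assoc, hd]
    ring

lemma chol_eq_min (hM : ∀ i j : ℕ, M i j = (starRingEnd ℂ) (M j i)) (i k : ℕ)
    (hr : ∀ l, l < max i k → cr M l ≠ 0) :
    M i k = ∑ j ∈ Finset.range (min i k + 1),
      cA M i j * ((cE M j : ℝ) : ℂ) * (starRingEnd ℂ) (cA M k j) := by
  rcases le_total k i with hk | hk
  · rw [min_eq_right hk]
    exact chol_eq_low hM i k hk fun l hl => hr l (lt_of_lt_of_le hl (le_max_left _ _))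
  · rw [min_eq_left hk]
    have h := chol_eq_low hM k i hk fun l hl => hr l (lt_of_lt_of_le hl (le_max_right _ _))
    rw [hM i k, h, map_sum]
    refine Finset.sum_congr rfl fun j _ => ?_
    simp only [map_mul, Complex.conj_conj, Complex.conj_ofReal]
    ring

lemma chol_eq_range (hM : ∀ i j : ℕ, M i j = (starRingEnd ℂ) (M j i)) {n i k : ℕ}
    (hi : i < n) (hk : k < n) (hr : ∀ l, l < max i k → cr M l ≠ 0) :
    M i k = ∑ j ∈ Finset.range n,
      cA M i j * ((cE M j : ℝ) : ℂ) * (starRingEnd ℂ) (cA M k j) := by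
  rw [chol_eq_min hM i k hr]
  refine Finset.sum_subset (Finset.range_subset_range.2 ?_) fun j hj hj2 => ?_
  · omega
  · rw [Finset.mem_range] at hj hj2
    push_neg at hj2
    rcases le_or_gt j i with hji | hji
    · have : k < j := by omega
      rw [cA_lt M this]
      simp
    · rw [cA_lt M hji]
      simp

end main

lemma det_formula (M A : ℕ → ℕ → ℂ) (E : ℕ → ℝ) (hA : LowerTri A) (n : ℕ)
    (heq : ∀ i k : Fin n, M i k = ∑ j ∈ Finset.range n,
      A i j * ((E j : ℝ) : ℂ) * (starRingEnd ℂ) (A k j)) :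
    (Matrix.of fun i j : Fin n => M i j).det
      = ∏ i : Fin n, (((E i : ℝ) : ℂ) * (A i i * (starRingEnd ℂ) (A i i))) := by
  classical
  set L : Matrix (Fin n) (Fin n) ℂ := Matrix.of fun i j : Fin n => A i j with hL
  set D : Matrix (Fin n) (Fin n) ℂ := Matrix.diagonal fun j : Fin n => ((E j : ℝ) : ℂ) with hD
  have hfac : (Matrix.of fun i j : Fin n => M i j) = L * D * Lᴴ := by
    ext i k
    rw [Matrix.mul_apply]
    simp only [Matrix.of_apply, Matrix.mul_diagonal, Matrix.conjTranspose_apply, hL, hD,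
      Matrix.of_apply, RCLike.star_def]
    rw [heq i k, ← Fin.sum_univ_eq_sum_range
      (fun j => A i j * ((E j : ℝ) : ℂ) * (starRingEnd ℂ) (A k j)) n]
  have hLtri : L.BlockTriangular OrderDual.toDual := by
    intro i j hij
    exact hA i j hij
  have hLdet : L.det = ∏ i : Fin n, A i i := Matrix.det_of_lowerTriangular L hLtri
  rw [hfac, Matrix.det_mul, Matrix.det_mul, Matrix.det_conjTranspose, hLdet,
    Matrix.det_diagonal]
  rw [← hLdet]
  rw [Matrix.det_of_lowerTriangular L hLtri]
  rw [star_prod]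
  rw [← Finset.prod_mul_distrib, ← Finset.prod_mul_distrib]
  refine Finset.prod_congr rfl fun i _ => ?_
  simp only [hL, Matrix.of_apply, RCLike.star_def]
  ring

lemma gcf_finsum (A : ℕ → ℕ → ℂ) (E : ℕ → ℝ) (hA : LowerTri A) (i k n : ℕ)
    (h : min i k < n) :
    ∑ᶠ j, A i j * ((E j : ℝ) : ℂ) * (starRingEnd ℂ) (A k j)
      = ∑ j ∈ Finset.range n, A i j * ((E j : ℝ) : ℂ) * (starRingEnd ℂ) (A k j) := by
  apply finsum_eq_finset_sum_of_support_subset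
  intro j hj
  simp only [Function.mem_support] at hj
  simp only [Finset.coe_range, Set.mem_Iio]
  by_contra hc
  push_neg at hc
  have hij : i < j ∨ k < j := by omega
  rcases hij with h1 | h1
  · exact hj (by rw [hA i j h1]; ring)
  · exact hj (by rw [hA k j h1]; simp)

lemma cr_ne {M : ℕ → ℕ → ℂ} (hM : HermM M) (hq : QuasiDef M) : ∀ n, cr M n ≠ 0 := by
  intro n
  induction n using Nat.strong_induction_on with
  | _ n ih =>
    have heq : ∀ i k : Fin (n + 1), M i k = ∑ j ∈ Finset.range (n + 1),
        cA M i j * ((cE M j : ℝ) : ℂ) * (starRingEnd ℂ) (cA M k j) := by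
      intro i k
      refine chol_eq_range hM i.isLt k.isLt fun l hl => ih l ?_
      have hi := i.isLt
      have hk := k.isLt
      omega
    have hdet := det_formula M (cA M) (cE M) (fun i j h => cA_lt M h) (n + 1) heq
    have hdet2 : (Matrix.of fun i j : Fin (n + 1) => M i j).det
        = ∏ i : Fin (n + 1), ((cr M i : ℝ) : ℂ) := by
      rw [hdet]
      exact Finset.prod_congr rfl fun i _ => diag_key M i
    have hq' := hq (n + 1)
    rw [hdet2] at hq'
    have := Finset.prod_ne_zero_iff.1 hq' ⟨n, Nat.lt_succ_self n⟩ (Finset.mem_univ _)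
    simpa using this

lemma gcf_exists {M : ℕ → ℕ → ℂ} (hM : HermM M) (hq : QuasiDef M) :
    GCF M (cA M) (cE M) := by
  refine ⟨fun i j h => cA_lt M h, fun j => ?_, cE_sign M, fun i k => ?_⟩
  · rw [cA_diag]
    refine ⟨?_, Complex.ofReal_im _⟩
    rw [Complex.ofReal_re]
    exact Real.sqrt_pos.2 (abs_pos.2 (cr_ne hM hq j))
  · rw [gcf_finsum (cA M) (cE M) (fun i j h => cA_lt M h) i k (min i k + 1)
      (Nat.lt_succ_self _)]
    exact chol_eq_min hM i k fun l _ => cr_ne hM hq l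

lemma gcf_quasidef {M : ℕ → ℕ → ℂ} (A : ℕ → ℕ → ℂ) (E : ℕ → ℝ) (h : GCF M A E) :
    QuasiDef M := by
  obtain ⟨hL, hP, hS, he⟩ := h
  intro n
  have heq : ∀ i k : Fin n, M i k = ∑ j ∈ Finset.range n,
      A i j * ((E j : ℝ) : ℂ) * (starRingEnd ℂ) (A k j) := by
    intro i k
    rw [he i k, gcf_finsum A E hL i k n (by have := i.isLt; have := k.isLt; omega)]
  rw [det_formula M A E hL n heq]
  refine Finset.prod_ne_zero_iff.2 fun i _ => ?_
  have hAne : A i i ≠ 0 := by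
    intro h0
    have := (hP i).1
    rw [h0] at this
    simp at this
  refine mul_ne_zero ?_ (mul_ne_zero hAne ?_)
  · rcases hS i with h1 | h1 <;> rw [h1] <;> norm_num
  · rw [starRingEnd_apply]
    exact star_ne_zero.2 hAne

lemma gcf_unique {M : ℕ → ℕ → ℂ} (A₁ A₂ : ℕ → ℕ → ℂ) (E₁ E₂ : ℕ → ℝ)
    (h1 : GCF M A₁ E₁) (h2 : GCF M A₂ E₂) : A₁ = A₂ ∧ E₁ = E₂ := by
  obtain ⟨hL1, hP1, hS1, he1⟩ := h1
  obtain ⟨hL2, hP2, hS2, he2⟩ := h2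
  have hA1ne : ∀ j, A₁ j j ≠ 0 := by
    intro j h0
    have := (hP1 j).1
    rw [h0] at this
    simp at this
  have hA2ne : ∀ j, A₂ j j ≠ 0 := by
    intro j h0
    have := (hP2 j).1
    rw [h0] at this
    simp at this
  have key : ∀ j : ℕ, (∀ i, A₁ i j = A₂ i j) ∧ E₁ j = E₂ j := by
    intro j
    induction j using Nat.strong_induction_on with
    | _ j ih =>
      have hs1 : M j j = ∑ l ∈ Finset.range (j + 1),
          A₁ j l * ((E₁ l : ℝ) : ℂ) * (starRingEnd ℂ) (A₁ j l) := by
        rw [he1 j j, gcf_finsum A₁ E₁ hL1 j j (j + 1) (by omega)]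
      have hs2 : M j j = ∑ l ∈ Finset.range (j + 1),
          A₂ j l * ((E₂ l : ℝ) : ℂ) * (starRingEnd ℂ) (A₂ j l) := by
        rw [he2 j j, gcf_finsum A₂ E₂ hL2 j j (j + 1) (by omega)]
      rw [Finset.sum_range_succ] at hs1 hs2
      have hC : ∑ l ∈ Finset.range j, A₁ j l * ((E₁ l : ℝ) : ℂ) * (starRingEnd ℂ) (A₁ j l)
          = ∑ l ∈ Finset.range j, A₂ j l * ((E₂ l : ℝ) : ℂ) * (starRingEnd ℂ) (A₂ j l) := by
        refine Finset.sum_congr rfl fun l hl => ?_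
        rw [Finset.mem_range] at hl
        rw [(ih l hl).1 j, (ih l hl).2]
      have hdd : A₁ j j * ((E₁ j : ℝ) : ℂ) * (starRingEnd ℂ) (A₁ j j)
          = A₂ j j * ((E₂ j : ℝ) : ℂ) * (starRingEnd ℂ) (A₂ j j) := by
        have h := hs1.symm.trans hs2
        rw [hC] at h
        exact add_left_cancel h
      have hre : E₁ j * Complex.normSq (A₁ j j) = E₂ j * Complex.normSq (A₂ j j) := by
        have hr1 : A₁ j j * ((E₁ j : ℝ) : ℂ) * (starRingEnd ℂ) (A₁ j j)
            = ((E₁ j * Complex.normSq (A₁ j j) : ℝ) : ℂ) := by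
          rw [mul_comm (A₁ j j), mul_assoc, Complex.mul_conj]
          push_cast
          ring
        have hr2 : A₂ j j * ((E₂ j : ℝ) : ℂ) * (starRingEnd ℂ) (A₂ j j)
            = ((E₂ j * Complex.normSq (A₂ j j) : ℝ) : ℂ) := by
          rw [mul_comm (A₂ j j), mul_assoc, Complex.mul_conj]
          push_cast
          ring
        rw [hr1, hr2] at hdd
        exact_mod_cast hdd
      have hp1 : 0 < Complex.normSq (A₁ j j) := Complex.normSq_pos.2 (hA1ne j)
      have hp2 : 0 < Complex.normSq (A₂ j j) := Complex.normSq_pos.2 (hA2ne j)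
      have hE : E₁ j = E₂ j := by
        rcases hS1 j with e1 | e1 <;> rcases hS2 j with e2 | e2 <;>
          rw [e1, e2] at hre ⊢ <;> first | rfl | nlinarith
      have hE1ne : E₁ j ≠ 0 := by
        rcases hS1 j with e1 | e1 <;> rw [e1] <;> norm_num
      have hnorm : Complex.normSq (A₁ j j) = Complex.normSq (A₂ j j) := by
        apply mul_left_cancel₀ hE1ne
        rw [hre, hE]
      have hdiag : A₁ j j = A₂ j j := by
        have i1 := (hP1 j).2
        have i2 := (hP2 j).2
        refine Complex.ext ?_ (i1.trans i2.symm)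
        rw [Complex.normSq_apply, Complex.normSq_apply, i1, i2] at hnorm
        simp only [mul_zero, add_zero] at hnorm
        nlinarith [(hP1 j).1, (hP2 j).1]
      refine ⟨fun i => ?_, hE⟩
      rcases lt_trichotomy i j with hij | rfl | hij
      · rw [hL1 i j hij, hL2 i j hij]
      · exact hdiag
      · have hs1' : M i j = ∑ l ∈ Finset.range (j + 1),
            A₁ i l * ((E₁ l : ℝ) : ℂ) * (starRingEnd ℂ) (A₁ j l) := by
          rw [he1 i j, gcf_finsum A₁ E₁ hL1 i j (j + 1) (by omega)]
        have hs2' : M i j = ∑ l ∈ Finset.range (j + 1),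
            A₂ i l * ((E₂ l : ℝ) : ℂ) * (starRingEnd ℂ) (A₂ j l) := by
          rw [he2 i j, gcf_finsum A₂ E₂ hL2 i j (j + 1) (by omega)]
        rw [Finset.sum_range_succ] at hs1' hs2'
        have hC' : ∑ l ∈ Finset.range j, A₁ i l * ((E₁ l : ℝ) : ℂ) * (starRingEnd ℂ) (A₁ j l)
            = ∑ l ∈ Finset.range j, A₂ i l * ((E₂ l : ℝ) : ℂ) * (starRingEnd ℂ) (A₂ j l) := by
          refine Finset.sum_congr rfl fun l hl => ?_
          rw [Finset.mem_range] at hl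
          rw [(ih l hl).1 i, (ih l hl).1 j, (ih l hl).2]
        have hmul : A₁ i j * (((E₁ j : ℝ) : ℂ) * (starRingEnd ℂ) (A₁ j j))
            = A₂ i j * (((E₂ j : ℝ) : ℂ) * (starRingEnd ℂ) (A₂ j j)) := by
          have h := hs1'.symm.trans hs2'
          rw [hC'] at h
          have h' := add_left_cancel h
          rw [← mul_assoc, ← mul_assoc]
          exact h'
        rw [hE, hdiag] at hmul
        have hden : ((E₂ j : ℝ) : ℂ) * (starRingEnd ℂ) (A₂ j j) ≠ 0 := by
          refine mul_ne_zero ?_ ?_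
          · rcases hS2 j with e2 | e2 <;> rw [e2] <;> norm_num
          · rw [starRingEnd_apply]
            exact star_ne_zero.2 (hA2ne j)
        exact mul_right_cancel₀ hden hmul
  exact ⟨funext fun i => funext fun j => (key j).1 i, funext fun j => (key j).2⟩


/-- An infinite Hermitian matrix has a (unique) generalized Cholesky factorization
M = A E A⁺ iff it is quasi-definite. -/
theorem stmt14 (M : ℕ → ℕ → ℂ) (hM : HermM M) :
    ((∃ A E, GCF M A E) ↔ QuasiDef M) ∧
    (∀ A₁ E₁ A₂ E₂, GCF M A₁ E₁ → GCF M A₂ E₂ → A₁ = A₂ ∧ E₁ = E₂) := by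
  refine ⟨⟨fun ⟨A, E, h⟩ => gcf_quasidef A E h, fun hq => ⟨cA M, cE M, gcf_exists hM hq⟩⟩, ?_⟩
  intro A₁ E₁ A₂ E₂ h1 h2
  exact gcf_unique A₁ A₂ E₁ E₂ h1 h2
end

section
/- An infinite Hermitian complex matrix M admits a Cholesky factorization M = A A⁺, with A lower triangular with positive diagonal entries, if and only if M is positive definite, i.e., X M X⁺ > 0 for every finitely supported nonzero row vector X (equivalently all leading principal minors are positive). Moreover, the factorization is unique. -/
open Finset

noncomputable abbrev cconj : ℂ →+* ℂ := starRingEnd ℂ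

/-- forward substitution: row entries -/
noncomputable def fsub (A : ℕ → ℕ → ℂ) (m : ℕ → ℂ) : ℕ → ℂ
  | j => (m j - ∑ k ∈ (Finset.range j).attach, fsub A m k * cconj (A j k)) / cconj (A j j)
termination_by j => j
decreasing_by exact Finset.mem_range.mp k.2

lemma fsub_def (A : ℕ → ℕ → ℂ) (m : ℕ → ℂ) (j : ℕ) :
    fsub A m j = (m j - ∑ k ∈ Finset.range j, fsub A m k * cconj (A j k)) / cconj (A j j) := by
  rw [fsub]
  congr 1
  rw [← Finset.sum_attach (Finset.range j) (fun k => fsub A m k * cconj (A j k))]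

/-- backward substitution -/
noncomputable def bsub (C : ℕ → ℕ → ℂ) (n : ℕ) : ℕ → ℂ
  | i => if i = n then 1 else if n < i then 0 else
      -(∑ j ∈ (Finset.Ioc i n).attach, bsub C n j * C j i) / C i i
termination_by i => n - i
decreasing_by
  · have := Finset.mem_Ioc.mp j.2; omega

lemma bsub_self (C : ℕ → ℕ → ℂ) (n : ℕ) : bsub C n n = 1 := by rw [bsub]; simp

lemma bsub_of_lt (C : ℕ → ℕ → ℂ) (n i : ℕ) (h : i < n) :
    bsub C n i = -(∑ j ∈ Finset.Ioc i n, bsub C n j * C j i) / C i i := by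
  rw [bsub]
  rw [if_neg (by omega), if_neg (by omega)]
  congr 1
  congr 1
  rw [← Finset.sum_attach (Finset.Ioc i n) (fun j => bsub C n j * C j i)]

lemma bsub_solve (C : ℕ → ℕ → ℂ) (n i : ℕ) (h : i < n) (hC : C i i ≠ 0) :
    ∑ j ∈ Finset.Icc i n, bsub C n j * C j i = 0 := by
  rw [Finset.Icc_eq_cons_Ioc (le_of_lt h), Finset.sum_cons, bsub_of_lt C n i h,
    div_mul_cancel₀ _ hC]
  ring


/-- Finset-sum version of Cholesky factorization. -/
def CFr (M A : ℕ → ℕ → ℂ) : Prop :=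
  LowerTri A ∧ PosDiag A ∧
    ∀ i k : ℕ, M i k = ∑ j ∈ Finset.range (min i k + 1), A i j * cconj (A k j)

lemma diag_ne {z : ℂ} (h : 0 < z.re ∧ z.im = 0) : z ≠ 0 := by
  intro h0; rw [h0] at h; simp at h

lemma cf_iff_cfr (M A : ℕ → ℕ → ℂ) : CF M A ↔ CFr M A := by
  have key : LowerTri A → ∀ i k : ℕ,
      ∑ᶠ j, A i j * cconj (A k j) = ∑ j ∈ Finset.range (min i k + 1), A i j * cconj (A k j) := by
    intro hL i k
    apply finsum_eq_sum_of_support_subset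
    intro j hj
    simp only [Function.mem_support] at hj
    simp only [Finset.coe_range, Set.mem_Iio]
    by_contra hc
    push_neg at hc
    rcases Nat.lt_or_ge i k with h | h
    · rw [hL i j (by omega)] at hj; simp at hj
    · rw [hL k j (by omega)] at hj; simp at hj
  constructor
  · rintro ⟨h1, h2, h3⟩
    exact ⟨h1, h2, fun i k => by rw [h3 i k, key h1 i k]⟩
  · rintro ⟨h1, h2, h3⟩
    exact ⟨h1, h2, fun i k => by rw [h3 i k, key h1 i k]⟩

lemma quad_ext (M : ℕ → ℕ → ℂ) (X : ℕ →₀ ℂ) (s : Finset ℕ) (hs : X.support ⊆ s) :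
    quadForm M X = ∑ i ∈ s, ∑ j ∈ s, X i * M i j * cconj (X j) := by
  unfold quadForm
  rw [Finset.sum_subset hs]
  · apply Finset.sum_congr rfl
    intro i _
    rw [Finset.sum_subset hs]
    intro j _ hj
    rw [Finsupp.notMem_support_iff.mp hj]
    simp
  · intro i _ hi
    rw [Finsupp.notMem_support_iff.mp hi]
    simp

lemma sum_shuffle (S T : Finset ℕ) (f g : ℕ → ℕ → ℂ) :
    ∑ i ∈ S, ∑ k ∈ S, ∑ j ∈ T, (f i j * cconj (g k j)) =
      ∑ j ∈ T, (∑ i ∈ S, f i j) * cconj (∑ k ∈ S, g k j) := by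
  have rhs : ∑ j ∈ T, (∑ i ∈ S, f i j) * cconj (∑ k ∈ S, g k j)
      = ∑ j ∈ T, ∑ i ∈ S, ∑ k ∈ S, (f i j * cconj (g k j)) := by
    apply Finset.sum_congr rfl
    intro j _
    rw [map_sum, Finset.sum_mul_sum]
  rw [rhs]
  have l1 : ∀ i, ∑ k ∈ S, ∑ j ∈ T, (f i j * cconj (g k j))
      = ∑ j ∈ T, ∑ k ∈ S, (f i j * cconj (g k j)) := fun i => Finset.sum_comm
  rw [Finset.sum_congr rfl (fun i _ => l1 i), Finset.sum_comm]

lemma cf_posdef (M A : ℕ → ℕ → ℂ) (h : CF M A) : PosDefM M := by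
  obtain ⟨hL, hD, hF⟩ := (cf_iff_cfr M A).mp h
  intro X hX
  have hSne : X.support.Nonempty := by
    rw [Finsupp.support_nonempty_iff]; exact hX
  set S := X.support with hS
  set m := S.max' hSne with hm
  set N := m + 1 with hN
  have hle : ∀ i ∈ S, i ≤ m := fun i hi => S.le_max' i hi
  -- extend factorization sums to a common range
  have hMik : ∀ i ∈ S, ∀ k ∈ S, M i k = ∑ j ∈ range N, A i j * cconj (A k j) := by
    intro i hi k hk
    rw [hF i k]
    apply Finset.sum_subset
    · intro j hj
      simp only [mem_range] at hj ⊢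
      have := hle i hi; have := hle k hk; omega
    · intro j _ hj
      simp only [mem_range] at hj
      push_neg at hj
      rcases Nat.lt_or_ge i k with h' | h'
      · rw [hL i j (by omega)]; ring
      · rw [hL k j (by omega)]; simp
  have hq : quadForm M X = ∑ j ∈ range N, (∑ i ∈ S, X i * A i j) * cconj (∑ k ∈ S, X k * A k j) := by
    rw [quad_ext M X S (le_refl _), ← sum_shuffle S (range N) (fun i j => X i * A i j) (fun k j => X k * A k j)]
    apply Finset.sum_congr rfl
    intro i hi
    apply Finset.sum_congr rfl
    intro k hk
    rw [hMik i hi k hk, Finset.mul_sum, Finset.sum_mul]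
    apply Finset.sum_congr rfl
    intro j _
    rw [map_mul]
    ring
  set W : ℕ → ℂ := fun j => ∑ i ∈ S, X i * A i j with hW
  have hq2 : quadForm M X = ((∑ j ∈ range N, Complex.normSq (W j) : ℝ) : ℂ) := by
    rw [hq]
    push_cast
    apply Finset.sum_congr rfl
    intro j _
    rw [← Complex.mul_conj]
  have hWm : W m = X m * A m m := by
    rw [hW]
    apply Finset.sum_eq_single_of_mem m (S.max'_mem hSne)
    intro i hi hne
    rw [hL i m (lt_of_le_of_ne (hle i hi) hne)]
    ring
  have hWmpos : 0 < Complex.normSq (W m) := by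
    rw [hWm]
    apply Complex.normSq_pos.mpr
    exact mul_ne_zero (Finsupp.mem_support_iff.mp (S.max'_mem hSne))
      (diag_ne (hD m))
  constructor
  · rw [hq2, Complex.ofReal_re]
    calc (0:ℝ) < Complex.normSq (W m) := hWmpos
      _ ≤ ∑ j ∈ range N, Complex.normSq (W j) := by
        apply Finset.single_le_sum (f := fun j => Complex.normSq (W j))
        · intro j _; exact Complex.normSq_nonneg _
        · simp [hN]
  · rw [hq2, Complex.ofReal_im]

lemma posdiag_eq_re {z : ℂ} (h : z.im = 0) : z = ((z.re : ℝ) : ℂ) := by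
  apply Complex.ext <;> simp [h]

lemma cf_unique (M A₁ A₂ : ℕ → ℕ → ℂ) (h1 : CF M A₁) (h2 : CF M A₂) : A₁ = A₂ := by
  obtain ⟨hL1, hD1, hF1⟩ := (cf_iff_cfr M A₁).mp h1
  obtain ⟨hL2, hD2, hF2⟩ := (cf_iff_cfr M A₂).mp h2
  have key : ∀ i, ∀ j, A₁ i j = A₂ i j := by
    intro i
    induction i using Nat.strong_induction_on with
    | _ i ihrow =>
      intro j
      induction j using Nat.strong_induction_on with
      | _ j ihcol =>
        rcases lt_trichotomy j i with hji | hji | hji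
        · -- off-diagonal entry
          have e1 := hF1 i j
          have e2 := hF2 i j
          rw [Nat.min_eq_right (le_of_lt hji)] at e1 e2
          rw [Finset.sum_range_succ] at e1 e2
          have hsum : ∑ k ∈ range j, A₁ i k * cconj (A₁ j k)
              = ∑ k ∈ range j, A₂ i k * cconj (A₂ j k) := by
            apply Finset.sum_congr rfl
            intro k hk
            rw [ihcol k (mem_range.mp hk), ihrow j hji k]
          have hd : A₂ j j ≠ 0 := diag_ne (hD2 j)
          have : A₁ i j * cconj (A₁ j j) = A₂ i j * cconj (A₂ j j) := by
            have := e1.symm.trans e2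
            rw [hsum] at this
            exact add_left_cancel this
          rw [ihrow j hji j] at this
          have hc : cconj (A₂ j j) ≠ 0 := by
            simpa using hd
          exact mul_right_cancel₀ hc this
        · -- diagonal entry
          subst hji
          have e1 := hF1 j j
          have e2 := hF2 j j
          rw [Nat.min_self] at e1 e2
          rw [Finset.sum_range_succ] at e1 e2
          have hsum : ∑ k ∈ range j, A₁ j k * cconj (A₁ j k)
              = ∑ k ∈ range j, A₂ j k * cconj (A₂ j k) := by
            apply Finset.sum_congr rfl
            intro k hk
            rw [ihcol k (mem_range.mp hk)]
          have hmc : A₁ j j * cconj (A₁ j j) = A₂ j j * cconj (A₂ j j) := by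
            have := e1.symm.trans e2
            rw [hsum] at this
            exact add_left_cancel this
          rw [Complex.mul_conj, Complex.mul_conj] at hmc
          have hn : Complex.normSq (A₁ j j) = Complex.normSq (A₂ j j) := by
            exact_mod_cast hmc
          obtain ⟨hp1, hi1⟩ := hD1 j
          obtain ⟨hp2, hi2⟩ := hD2 j
          rw [Complex.normSq_apply, Complex.normSq_apply, hi1, hi2] at hn
          simp only [mul_zero, add_zero] at hn
          have : (A₁ j j).re = (A₂ j j).re := by
            nlinarith
          apply Complex.ext
          · exact this
          · rw [hi1, hi2]
        · rw [hL1 i j hji, hL2 i j hji]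
  funext i j
  exact key i j

/-- Partial Cholesky factorization of the leading n×n block. -/
def PCF (M A : ℕ → ℕ → ℂ) (n : ℕ) : Prop :=
  (∀ i j, i < j → A i j = 0) ∧ (∀ i, n ≤ i → ∀ j, A i j = 0) ∧
  (∀ i, i < n → 0 < (A i i).re ∧ (A i i).im = 0) ∧
  (∀ i k, i < n → k < n → M i k = ∑ j ∈ Finset.range (min i k + 1), A i j * cconj (A k j))

lemma pcf_zero (M : ℕ → ℕ → ℂ) : PCF M (fun _ _ => 0) 0 :=
  ⟨fun _ _ _ => rfl, fun _ _ _ => rfl, fun i hi => absurd hi (Nat.not_lt_zero i),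
    fun _ _ hi _ => absurd hi (Nat.not_lt_zero _)⟩

lemma pcf_step (M : ℕ → ℕ → ℂ) (hM : HermM M) (hP : PosDefM M) (n : ℕ) (A : ℕ → ℕ → ℂ)
    (h : PCF M A n) :
    ∃ A', (∀ i, i < n → ∀ j, A' i j = A i j) ∧ PCF M A' (n + 1) := by
  obtain ⟨hL, hZ, hD, hF⟩ := h
  have hdne : ∀ j, j < n → cconj (A j j) ≠ 0 := by
    intro j hj
    simpa using diag_ne (hD j hj)
  set b : ℕ → ℂ := fsub A (M n) with hb
  -- Claim 1 : row formula
  have claim1 : ∀ j, j < n →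
      M n j = ∑ k ∈ range j, b k * cconj (A j k) + b j * cconj (A j j) := by
    intro j hj
    have := fsub_def A (M n) j
    rw [← hb] at this
    field_simp [hdne j hj] at this
    linear_combination -this
  -- the matrix with row n filled in (except its diagonal entry)
  set C : ℕ → ℕ → ℂ := fun i j => if i < n then A i j else if i = n ∧ j < n then b j else 0
    with hC
  have hCA : ∀ i, i < n → ∀ j, C i j = A i j := by
    intro i hi j; simp [hC, hi]
  have hCn : ∀ j, j < n → C n j = b j := by
    intro j hj; simp [hC, hj]
  have hCd : ∀ k, k < n → C k k ≠ 0 := by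
    intro k hk; rw [hCA k hk]; exact diag_ne (hD k hk)
  have hClow : ∀ i j, i < j → j < n → C i j = 0 := by
    intro i j hij hjn
    rw [hCA i (lt_trans hij hjn), hL i j hij]
  -- Step A : factorization of M off the (n,n) entry
  set d : ℂ := M n n - ∑ k ∈ range n, b k * cconj (b k) with hd
  have core : ∀ j, j < n → M n j = ∑ k ∈ range n, C n k * cconj (C j k) := by
    intro j hj
    rw [claim1 j hj, ← Finset.sum_range_succ (fun k => b k * cconj (A j k)) j]
    rw [Finset.sum_subset (Finset.range_subset_range.mpr (by omega : j + 1 ≤ n))]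
    · apply Finset.sum_congr rfl
      intro k hk
      rw [hCn k (mem_range.mp hk), hCA j hj]
    · intro k hk hk2
      simp only [mem_range] at hk hk2
      rw [hL j k (by omega)]
      simp
  have stepA : ∀ i ∈ range (n+1), ∀ j ∈ range (n+1),
      M i j = (∑ k ∈ range n, C i k * cconj (C j k)) + (if i = n ∧ j = n then d else 0) := by
    intro i hi j hj
    simp only [mem_range] at hi hj
    rcases Nat.lt_or_ge i n with hi' | hi'
    · rcases Nat.lt_or_ge j n with hj' | hj'
      · -- both < n
        rw [if_neg (by omega), add_zero, hF i j hi' hj']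
        rw [Finset.sum_subset (Finset.range_subset_range.mpr (by omega : min i j + 1 ≤ n))]
        · exact Finset.sum_congr rfl fun k hk => by rw [hCA i hi', hCA j hj']
        · intro k hk hk2
          simp only [mem_range] at hk hk2
          rcases Nat.lt_or_ge i j with h' | h'
          · rw [hL i k (by omega)]; ring
          · rw [hL j k (by omega)]; simp
      · -- i < n, j = n
        rw [if_neg (by omega), add_zero, show j = n from by omega, hM i n]
        rw [core i hi', map_sum]
        apply Finset.sum_congr rfl
        intro k _
        simp only [map_mul, Complex.conj_conj]
        ring
    · rcases Nat.lt_or_ge j n with hj' | hj'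
      · rw [if_neg (by omega), add_zero, show i = n from by omega]
        exact core j hj'
      · rw [show i = n from by omega, show j = n from by omega, if_pos ⟨rfl, rfl⟩, hd]
        have : ∑ k ∈ range n, C n k * cconj (C n k) = ∑ k ∈ range n, b k * cconj (b k) :=
          Finset.sum_congr rfl fun k hk => by rw [hCn k (mem_range.mp hk)]
        rw [this]
        ring
  -- Claim 2 : the pivot is positive
  set Y : ℕ → ℂ := bsub C n with hY
  have hYn : Y n = 1 := bsub_self C n
  set X : ℕ →₀ ℂ := ∑ i ∈ range (n+1), Finsupp.single i (Y i) with hX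
  have hXval : ∀ t, X t = if t < n + 1 then Y t else 0 := by
    intro t
    rw [hX, Finsupp.finset_sum_apply]
    simp only [Finsupp.single_apply]
    rw [Finset.sum_ite_eq' (range (n+1)) t Y]
    simp [Finset.mem_range]
  have hXsupp : X.support ⊆ range (n+1) := by
    intro t ht
    rw [Finsupp.mem_support_iff, hXval t] at ht
    by_contra hc
    rw [if_neg (by simpa using hc)] at ht
    exact ht rfl
  have hXne : X ≠ 0 := by
    intro h0
    have h1 : X n = 1 := by rw [hXval]; simp [hYn]
    rw [h0] at h1
    simp at h1
  have hWzero : ∀ k, k < n → ∑ i ∈ range (n+1), Y i * C i k = 0 := by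
    intro k hk
    have hsub : Finset.Icc k n ⊆ range (n+1) := by
      intro t ht
      simp only [Finset.mem_Icc] at ht
      simp only [mem_range]; omega
    rw [← Finset.sum_subset hsub]
    · exact bsub_solve C n k hk (hCd k hk)
    · intro i hi hi2
      simp only [mem_range] at hi
      simp only [Finset.mem_Icc] at hi2
      rw [hClow i k (by omega) hk]
      ring
  have hquad : quadForm M X = d := by
    rw [quad_ext M X (range (n+1)) hXsupp]
    have e1 : ∀ i ∈ range (n+1), ∀ j ∈ range (n+1), X i * M i j * cconj (X j)
        = (∑ k ∈ range n, (Y i * C i k) * cconj (Y j * C j k))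
          + (if i = n ∧ j = n then Y i * d * cconj (Y j) else 0) := by
      intro i hi j hj
      have h1 : X i * M i j * cconj (X j)
          = Y i * (∑ k ∈ range n, C i k * cconj (C j k)) * cconj (Y j)
            + Y i * (if i = n ∧ j = n then d else 0) * cconj (Y j) := by
        rw [hXval i, hXval j, if_pos (mem_range.mp hi), if_pos (mem_range.mp hj),
          stepA i hi j hj]
        ring
      rw [h1]
      congr 1
      · rw [Finset.mul_sum, Finset.sum_mul]
        apply Finset.sum_congr rfl
        intro k _
        rw [map_mul]
        ring
      · split_ifs with hc
        · rfl
        · ring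
    rw [Finset.sum_congr rfl (fun i hi => Finset.sum_congr rfl (fun j hj => e1 i hi j hj))]
    have e2 : ∀ i ∈ range (n+1),
        ∑ j ∈ range (n+1), ((∑ k ∈ range n, (Y i * C i k) * cconj (Y j * C j k))
          + (if i = n ∧ j = n then Y i * d * cconj (Y j) else 0))
        = (∑ j ∈ range (n+1), ∑ k ∈ range n, (Y i * C i k) * cconj (Y j * C j k))
          + (if i = n then Y i * d * cconj (Y n) else 0) := by
      intro i hi
      rw [Finset.sum_add_distrib]
      congr 1
      rcases eq_or_ne i n with h | hne
      · subst h
        simp only [true_and, if_pos rfl]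
        rw [Finset.sum_ite_eq' (range (i+1)) i (fun j => Y i * d * cconj (Y j))]
        simp
      · simp [hne]
    rw [Finset.sum_congr rfl e2, Finset.sum_add_distrib]
    have e3 : ∑ i ∈ range (n+1), (if i = n then Y i * d * cconj (Y n) else 0) = d := by
      rw [Finset.sum_ite_eq' (range (n+1)) n (fun i => Y i * d * cconj (Y n))]
      simp [hYn]
    rw [e3]
    have e4 : ∑ i ∈ range (n+1), ∑ j ∈ range (n+1),
        ∑ k ∈ range n, ((Y i * C i k) * cconj (Y j * C j k)) = 0 := by
      rw [sum_shuffle (range (n+1)) (range n) (fun i k => Y i * C i k) (fun j k => Y j * C j k)]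
      apply Finset.sum_eq_zero
      intro k hk
      rw [hWzero k (mem_range.mp hk)]
      ring
    rw [e4, zero_add]
  obtain ⟨hdre, hdim⟩ : 0 < d.re ∧ d.im = 0 := by
    rw [← hquad]; exact hP X hXne
  set α : ℝ := Real.sqrt d.re with hα
  have hαpos : 0 < α := Real.sqrt_pos.mpr hdre
  have hαsq : (α : ℂ) * cconj (α : ℂ) = d := by
    rw [Complex.conj_ofReal, ← Complex.ofReal_mul, Real.mul_self_sqrt (le_of_lt hdre)]
    exact (posdiag_eq_re hdim).symm
  have hCzero : ∀ i j, i < j → C i j = 0 := by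
    intro i j hij
    by_cases h1 : i < n
    · rw [hCA i h1]; exact hL i j hij
    · simp only [hC]
      rw [if_neg h1, if_neg (by omega)]
  have hCrow : ∀ i, n < i → ∀ j, C i j = 0 := by
    intro i hi j
    simp only [hC]
    rw [if_neg (by omega), if_neg (by omega)]
  -- the extended matrix
  set A' : ℕ → ℕ → ℂ := fun i j => if i = n ∧ j = n then (α : ℂ) else C i j with hA'
  have hA'val : ∀ i j, A' i j = if i = n ∧ j = n then (α : ℂ) else C i j := fun i j => rfl
  refine ⟨A', ?_, ?_, ?_, ?_, ?_⟩
  · intro i hi j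
    rw [hA'val, if_neg (by omega), hCA i hi]
  · -- lower triangular
    intro i j hij
    rw [hA'val, if_neg (by omega)]
    exact hCzero i j hij
  · -- rows ≥ n+1 vanish
    intro i hi j
    rw [hA'val, if_neg (by omega)]
    exact hCrow i (by omega) j
  · -- positive diagonal
    intro i hi
    rcases Nat.lt_or_ge i n with hi' | hi'
    · rw [hA'val, if_neg (by omega), hCA i hi']
      exact hD i hi'
    · rw [hA'val, show i = n from by omega, if_pos ⟨rfl, rfl⟩]
      constructor
      · simpa using hαpos
      · simp
  · -- the factorization formula
    intro i k hi hk
    simp only [hA'val]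
    rcases Nat.lt_or_ge i n with hi' | hi'
    · rcases Nat.lt_or_ge k n with hk' | hk'
      · -- both < n
        have hst := stepA i (by simp only [mem_range]; omega) k (by simp only [mem_range]; omega)
        rw [if_neg (by omega), add_zero] at hst
        rw [hst, ← Finset.sum_subset (Finset.range_subset_range.mpr (by omega : min i k + 1 ≤ n))]
        · apply Finset.sum_congr rfl
          intro j hj
          simp only [mem_range] at hj
          rw [if_neg (by omega), if_neg (by omega)]
        · intro j hj hj2
          simp only [mem_range] at hj hj2
          rcases Nat.lt_or_ge i k with h' | h'
          · rw [hCzero i j (by omega)]; ring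
          · rw [hCzero k j (by omega)]; simp
      · -- i < n, k = n
        rw [show k = n from by omega, Nat.min_eq_left (by omega), hM i n]
        rw [core i hi', map_sum,
          ← Finset.sum_subset (Finset.range_subset_range.mpr (by omega : i + 1 ≤ n))]
        · apply Finset.sum_congr rfl
          intro j hj
          simp only [mem_range] at hj
          rw [if_neg (by omega), if_neg (by omega), map_mul, Complex.conj_conj]
          ring
        · intro j hj hj2
          simp only [mem_range] at hj hj2
          rw [hCzero i j (by omega)]
          simp
    · rw [show i = n from by omega]
      rcases Nat.lt_or_ge k n with hk' | hk'
      · -- i = n, k < n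
        rw [Nat.min_eq_right (by omega), core k hk',
          ← Finset.sum_subset (Finset.range_subset_range.mpr (by omega : k + 1 ≤ n))]
        · apply Finset.sum_congr rfl
          intro j hj
          simp only [mem_range] at hj
          rw [if_neg (by omega), if_neg (by omega)]
        · intro j hj hj2
          simp only [mem_range] at hj hj2
          rw [hCzero k j (by omega)]
          simp
      · -- i = k = n
        rw [show k = n from by omega]
        rw [Nat.min_self, Finset.sum_range_succ, if_pos ⟨rfl, rfl⟩, hαsq]
        have hdiag : ∑ j ∈ range n, ((if n = n ∧ j = n then (α:ℂ) else C n j)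
            * cconj (if n = n ∧ j = n then (α:ℂ) else C n j))
            = ∑ j ∈ range n, b j * cconj (b j) := by
          apply Finset.sum_congr rfl
          intro j hj
          simp only [mem_range] at hj
          rw [if_neg (by omega), hCn j hj]
        rw [hdiag, hd]
        ring

/-- The increasing sequence of partial Cholesky factorizations. -/
noncomputable def cholF (M : ℕ → ℕ → ℂ) (hM : HermM M) (hP : PosDefM M) :
    (n : ℕ) → {A : ℕ → ℕ → ℂ // PCF M A n}
  | 0 => ⟨fun _ _ => 0, pcf_zero M⟩
  | n + 1 =>
    ⟨Classical.choose (pcf_step M hM hP n _ (cholF M hM hP n).2),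
      (Classical.choose_spec (pcf_step M hM hP n _ (cholF M hM hP n).2)).2⟩

lemma cholF_succ_eq (M : ℕ → ℕ → ℂ) (hM : HermM M) (hP : PosDefM M) (n : ℕ) :
    ∀ i, i < n → ∀ j, (cholF M hM hP (n+1)).1 i j = (cholF M hM hP n).1 i j := by
  exact (Classical.choose_spec (pcf_step M hM hP n _ (cholF M hM hP n).2)).1

lemma cholF_agree (M : ℕ → ℕ → ℂ) (hM : HermM M) (hP : PosDefM M) (n : ℕ) :
    ∀ i, i < n → ∀ j, (cholF M hM hP n).1 i j = (cholF M hM hP (i+1)).1 i j := by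
  induction n with
  | zero => intro i hi; omega
  | succ n ih =>
    intro i hi j
    rcases Nat.lt_or_ge i n with h | h
    · rw [cholF_succ_eq M hM hP n i h, ih i h]
    · have : i = n := by omega
      subst this
      rfl

lemma exists_cf (M : ℕ → ℕ → ℂ) (hM : HermM M) (hP : PosDefM M) : ∃ A, CF M A := by
  set A : ℕ → ℕ → ℂ := fun i j => (cholF M hM hP (i+1)).1 i j with hA
  refine ⟨A, (cf_iff_cfr M A).mpr ⟨?_, ?_, ?_⟩⟩
  · intro i j hij
    exact (cholF M hM hP (i+1)).2.1 i j hij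
  · intro i
    have := (cholF M hM hP (i+1)).2.2.2.1 i (Nat.lt_succ_self i)
    exact this
  · intro i k
    set N := max i k + 1 with hN
    have hiN : i < N := by omega
    have hkN : k < N := by omega
    have := (cholF M hM hP N).2.2.2.2 i k hiN hkN
    rw [this]
    apply Finset.sum_congr rfl
    intro j hj
    rw [cholF_agree M hM hP N i hiN j, cholF_agree M hM hP N k hkN j]

/-- An infinite Hermitian matrix has a (unique) Cholesky factorization M = A A⁺
iff it is positive definite. -/
theorem stmt15 (M : ℕ → ℕ → ℂ) (hM : HermM M) :
    ((∃ A, CF M A) ↔ PosDefM M) ∧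
    (∀ A₁ A₂, CF M A₁ → CF M A₂ → A₁ = A₂) := by
  constructor
  · constructor
    · rintro ⟨A, hA⟩
      exact cf_posdef M A hA
    · intro hP
      exact exists_cf M hM hP
  · intro A₁ A₂ h1 h2
    exact cf_unique M A₁ A₂ h1 h2
end
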